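/- Let a < b be real numbers and let f(x) = 1/(b−a) for a ≤ x ≤ b and f(x) = 0 otherwise, the density of the uniform distribution on [a, b]. Then −∫_ℝ f(x) log₂(|x| · f(x)) dx = −1/2 + log₂(√2 · e · (b−a)) + (a·log₂|a| − b·log₂|b|)/(b−a), with the convention 0·log₂ 0 = 0. In particular, for a = −c and b = c with c > 0, this value equals 1 + log₂ e, independent of c. -/

import Mathlib

open Real MeasureTheory Set

lemma myIntegrableOn_log {c : ℝ} (hc : 0 ≤ c) :
    IntegrableOn Real.log (Set.Ioc 0 c) := by
  have hg : IntegrableOn (fun x : ℝ => 2 * x ^ (-(1/2) : ℝ) + x) (Set.Ioc 0 c) := by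
    have h1 : IntervalIntegrable (fun x : ℝ => x ^ (-(1/2) : ℝ)) volume 0 c :=
      intervalIntegral.intervalIntegrable_rpow' (by norm_num)
    have h2 := (h1.const_mul 2).add (intervalIntegral.intervalIntegrable_id (a := 0) (b := c) (μ := volume))
    rwa [intervalIntegrable_iff, Set.uIoc_of_le hc] at h2
  refine hg.mono' Real.measurable_log.aestronglyMeasurable ?_
  filter_upwards [ae_restrict_mem measurableSet_Ioc] with x hx
  have hx0 : 0 < x := hx.1
  have hr : 0 < x ^ (-(1/2) : ℝ) := Real.rpow_pos_of_pos hx0 _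
  rcases le_or_gt x 1 with h1 | h1
  · have hlog : Real.log x ≤ 0 := Real.log_nonpos hx0.le h1
    have key : Real.log (x ^ (-(1/2) : ℝ)) ≤ x ^ (-(1/2) : ℝ) - 1 :=
      Real.log_le_sub_one_of_pos hr
    rw [Real.log_rpow hx0] at key
    rw [Real.norm_eq_abs, abs_of_nonpos hlog]
    nlinarith
  · have hlog : 0 ≤ Real.log x := Real.log_nonneg h1.le
    have key : Real.log x ≤ x - 1 := Real.log_le_sub_one_of_pos hx0
    rw [Real.norm_eq_abs, abs_of_nonneg hlog]
    nlinarith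

lemma myIntervalIntegrable_log (a b : ℝ) : IntervalIntegrable Real.log volume a b := by
  have key : ∀ c : ℝ, IntervalIntegrable Real.log volume 0 c := by
    have pos : ∀ c : ℝ, 0 ≤ c → IntervalIntegrable Real.log volume 0 c := by
      intro c hc
      rw [intervalIntegrable_iff, Set.uIoc_of_le hc]
      exact myIntegrableOn_log hc
    intro c
    rcases le_or_gt 0 c with hc | hc
    · exact pos c hc
    · have h := (IntervalIntegrable.iff_comp_neg).1 (pos (-c) (by linarith))
      simp only [neg_zero, neg_neg] at h
      have : (fun x : ℝ => Real.log (-x)) = Real.log := by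
        funext x; exact Real.log_neg_eq_log x
      rwa [this] at h
  exact (key a).symm.trans (key b)

lemma myIntegral_log (a b : ℝ) :
    ∫ x in a..b, Real.log x = b * Real.log b - a * Real.log a - b + a := by
  have key : ∀ c : ℝ, 0 ≤ c → ∫ x in (0:ℝ)..c, Real.log x = c * Real.log c - c := by
    intro c hc
    have hcont : ContinuousOn (fun x : ℝ => x * Real.log x - x) (Set.Icc 0 c) :=
      (Real.continuous_mul_log.sub continuous_id).continuousOn
    have hderiv : ∀ x ∈ Set.Ioo (0:ℝ) c,
        HasDerivWithinAt (fun x : ℝ => x * Real.log x - x) (Real.log x) (Set.Ioi x) x := by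
      intro x hx
      have h := (Real.hasDerivAt_mul_log (ne_of_gt hx.1)).sub (hasDerivAt_id x)
      simpa [Pi.sub_def] using h.hasDerivWithinAt
    have h := intervalIntegral.integral_eq_sub_of_hasDeriv_right_of_le hc hcont hderiv
      (myIntervalIntegrable_log 0 c)
    simpa using h
  have keyall : ∀ c : ℝ, ∫ x in (0:ℝ)..c, Real.log x = c * Real.log c - c := by
    intro c
    rcases le_or_gt 0 c with hc | hc
    · exact key c hc
    · have h1 : ∫ x in (0:ℝ)..c, Real.log x = ∫ x in (0:ℝ)..c, Real.log (-x) := by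
        simp [Real.log_neg_eq_log]
      rw [h1, intervalIntegral.integral_comp_neg (f := Real.log), neg_zero,
        intervalIntegral.integral_symm 0 (-c), key (-c) (by linarith), Real.log_neg_eq_log]
      ring
  have h := intervalIntegral.integral_add_adjacent_intervals
    (myIntervalIntegrable_log a 0) (myIntervalIntegrable_log 0 b)
  rw [← h, intervalIntegral.integral_symm, keyall a, keyall b]
  ring
theorem fp_entropy_uniform
    (a b : ℝ) (hab : a < b)
    (f : ℝ → ℝ)
    (hf : ∀ x, f x = if a ≤ x ∧ x ≤ b then 1 / (b - a) else 0) :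
    (-∫ x, f x * Real.logb 2 (|x| * f x)
      = -(1 / 2) + Real.logb 2 (Real.sqrt 2 * Real.exp 1 * (b - a))
        + (a * Real.logb 2 |a| - b * Real.logb 2 |b|) / (b - a))
    ∧ (∀ c : ℝ, 0 < c → a = -c → b = c →
      -∫ x, f x * Real.logb 2 (|x| * f x) = 1 + Real.logb 2 (Real.exp 1)) := by
  have hd : 0 < b - a := sub_pos.2 hab
  have hd' : (b - a) ≠ 0 := ne_of_gt hd
  have hL : (0:ℝ) < Real.log 2 := Real.log_pos one_lt_two
  have hL' : Real.log 2 ≠ 0 := ne_of_gt hL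
  have hinv : (0:ℝ) < (b - a)⁻¹ := inv_pos.2 hd
  have hstep1 : (∫ x, f x * Real.logb 2 (|x| * f x))
      = ∫ x in Set.Icc a b, (b-a)⁻¹ * Real.logb 2 (|x| * (b-a)⁻¹) := by
    rw [← MeasureTheory.integral_indicator measurableSet_Icc]
    congr 1; funext x
    rw [hf x]
    by_cases hx : a ≤ x ∧ x ≤ b
    · rw [Set.indicator_of_mem (Set.mem_Icc.2 hx), if_pos hx, one_div]
    · rw [Set.indicator_of_notMem (fun h => hx (Set.mem_Icc.1 h)), if_neg hx,
        zero_mul]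
  have hstep2 : (∫ x in Set.Icc a b, (b-a)⁻¹ * Real.logb 2 (|x| * (b-a)⁻¹))
      = ∫ x in a..b, (b-a)⁻¹ * Real.logb 2 (|x| * (b-a)⁻¹) := by
    rw [intervalIntegral.integral_of_le hab.le, MeasureTheory.integral_Icc_eq_integral_Ioc]
  have hstep3 : (∫ x in a..b, (b-a)⁻¹ * Real.logb 2 (|x| * (b-a)⁻¹))
      = ∫ x in a..b, (((b-a)⁻¹ / Real.log 2) * Real.log x
          + (b-a)⁻¹ * (Real.log (b-a)⁻¹ / Real.log 2)) := by
    apply intervalIntegral.integral_congr_ae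
    have h0 : ∀ᵐ (x:ℝ), x ≠ 0 := by
      refine MeasureTheory.ae_iff.2 ?_
      simp only [not_not]
      simp
    filter_upwards [h0] with x hx _
    rw [Real.logb, Real.log_mul (abs_ne_zero.2 hx) (ne_of_gt hinv), Real.log_abs]
    ring
  have hstep4 : (∫ x in a..b, (((b-a)⁻¹ / Real.log 2) * Real.log x
          + (b-a)⁻¹ * (Real.log (b-a)⁻¹ / Real.log 2)))
      = ((b-a)⁻¹ / Real.log 2) * (b * Real.log b - a * Real.log a - b + a)
        + (b-a) * ((b-a)⁻¹ * (Real.log (b-a)⁻¹ / Real.log 2)) := by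
    rw [intervalIntegral.integral_add ((myIntervalIntegrable_log a b).const_mul _)
      intervalIntegrable_const, intervalIntegral.integral_const_mul, myIntegral_log,
      intervalIntegral.integral_const, smul_eq_mul]
  have hI : -∫ x, f x * Real.logb 2 (|x| * f x)
      = -(1 / 2) + Real.logb 2 (Real.sqrt 2 * Real.exp 1 * (b - a))
        + (a * Real.logb 2 |a| - b * Real.logb 2 |b|) / (b - a) := by
    rw [hstep1, hstep2, hstep3, hstep4]
    simp only [Real.logb]
    rw [Real.log_mul (by positivity) hd',
      Real.log_mul (by positivity) (Real.exp_ne_zero 1),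
      Real.log_sqrt (by norm_num), Real.log_exp, Real.log_inv, Real.log_abs, Real.log_abs]
    field_simp
    ring
  refine ⟨hI, ?_⟩
  intro c hc ha hb
  rw [hI, ha, hb]
  have h2c : c - -c = 2 * c := by ring
  rw [h2c, abs_neg, abs_of_pos hc]
  simp only [Real.logb]
  rw [Real.log_mul (by positivity) (by positivity),
    Real.log_mul (by positivity) (Real.exp_ne_zero 1),
    Real.log_mul (by norm_num) (ne_of_gt hc),
    Real.log_sqrt (by norm_num), Real.log_exp]
  field_simp
  ring
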